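/- When data arrivals form an ON–OFF discrete-time Markov process, the minimum energy per bit for confidential message transmission to receiver 1 is the same as for a constant-rate source: lim_{snr→0⁺} (δ·P(z1 ≥ z2)·snr)/r_avg(snr) = P(z1 ≥ z2)·log_e 2 / E[(z1 − z2)·1{z1 ≥ z2}], independent of θ, p11, p22. -/

import Mathlib

open MeasureTheory ProbabilityTheory Filter Set


-- pointwise derivative lemma
lemma aux_deriv (θ δ a b : ℝ) :
    HasDerivAt (fun s : ℝ => 1 - Real.exp (-θ * (Real.log ((1 + δ*s*a)/(1 + δ*s*b)) / Real.log 2)))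
      (θ * δ * (a - b) / Real.log 2) 0 := by
  have e1 : (fun s : ℝ => 1 + δ*s*a) = (fun s => 1 + (δ*a)*s) := by funext s; ring
  have e2 : (fun s : ℝ => 1 + δ*s*b) = (fun s => 1 + (δ*b)*s) := by funext s; ring
  have h1 : HasDerivAt (fun s : ℝ => 1 + δ*s*a) (δ*a) 0 := by
    rw [e1]; simpa using ((hasDerivAt_id (0:ℝ)).const_mul (δ*a)).const_add 1
  have h2 : HasDerivAt (fun s : ℝ => 1 + δ*s*b) (δ*b) 0 := by
    rw [e2]; simpa using ((hasDerivAt_id (0:ℝ)).const_mul (δ*b)).const_add 1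
  have hq := h1.div h2 (by norm_num)
  have hlog := hq.log (by norm_num)
  have e3 : (fun s : ℝ => -θ * (Real.log ((1 + δ*s*a)/(1 + δ*s*b)) / Real.log 2))
      = (fun s => (-θ/Real.log 2) * Real.log ((1 + δ*s*a)/(1 + δ*s*b))) := by funext s; ring
  have hc : HasDerivAt (fun s => (-θ/Real.log 2) * Real.log ((1 + δ*s*a)/(1 + δ*s*b))) _ 0 :=
    hlog.const_mul (-θ/Real.log 2)
  rw [← e3] at hc
  have hexp := hc.exp
  have hfin := hexp.const_sub 1
  refine hfin.congr_deriv ?_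
  simp
  ring

lemma aux_phi (p11 p22 : ℝ) (hp11 : p11 ∈ Set.Ioo (0:ℝ) 1) (hp22 : p22 ∈ Set.Ioo (0:ℝ) 1) :
    HasDerivAt (fun ε : ℝ => Real.log ((1 - p11*(1-ε)) / ((1-p11-p22)*(1-ε)^2 + p22*(1-ε))))
      ((2 - p11 - p22)/(1 - p11)) 0 := by
  obtain ⟨h0, h1⟩ := hp11
  obtain ⟨h2, h3⟩ := hp22
  have hne : (1:ℝ) - p11 ≠ 0 := by linarith
  have eN : (fun ε : ℝ => 1 - p11*(1-ε)) = (fun ε => (1 - p11) + p11*ε) := by funext ε; ring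
  have hN : HasDerivAt (fun ε : ℝ => 1 - p11*(1-ε)) p11 0 := by
    rw [eN]; simpa using ((hasDerivAt_id (0:ℝ)).const_mul p11).const_add (1-p11)
  have hD : HasDerivAt (fun ε : ℝ => (1-p11-p22)*(1-ε)^2 + p22*(1-ε))
      (-(2 - 2*p11 - p22)) 0 := by
    have hb : HasDerivAt (fun ε : ℝ => (1:ℝ)-ε) (-1) 0 := by
      simpa using (hasDerivAt_id (0:ℝ)).const_sub 1
    have hsq := (hb.pow 2).const_mul (1-p11-p22)
    have hl := hb.const_mul p22
    have := hsq.add hl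
    refine this.congr_deriv ?_
    norm_num; ring
  have hDne : (1-p11-p22)*(1-(0:ℝ))^2 + p22*(1-0) ≠ 0 := by norm_num; linarith
  have hq := hN.div hD hDne
  have hq0 : (1 - p11*(1-(0:ℝ))) / ((1-p11-p22)*(1-(0:ℝ))^2 + p22*(1-0)) ≠ 0 := by
    norm_num
    intro h <;> linarith
  have hfin := hq.log hq0
  norm_num at hfin
  convert hfin using 1
  field_simp
  ring

lemma aux_bound (θ δ s a b M : ℝ) (hθ : 0 < θ) (hδ : 0 < δ) (hs : 0 < s)
    (hb : 0 ≤ b) (hba : b ≤ a) (haM : a ≤ M) :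
    0 ≤ 1 - Real.exp (-θ * Real.logb 2 ((1 + δ*s*a)/(1 + δ*s*b))) ∧
      1 - Real.exp (-θ * Real.logb 2 ((1 + δ*s*a)/(1 + δ*s*b))) ≤ θ * δ * s * M / Real.log 2 := by
  have hlog2 : 0 < Real.log 2 := Real.log_pos one_lt_two
  have hδs : 0 < δ * s := mul_pos hδ hs
  have hδsb : 0 ≤ δ*s*b := by positivity
  have hab : δ*s*b ≤ δ*s*a := by
    have := mul_le_mul_of_nonneg_left hba hδs.le
    calc δ*s*b = δ*s*b := rfl
      _ ≤ δ*s*a := by rw [mul_assoc, mul_assoc]; exact mul_le_mul_of_nonneg_left (by nlinarith) hδ.le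
  have hdb : 0 < 1 + δ*s*b := by linarith
  have hda : 0 < 1 + δ*s*a := by linarith
  have hq1 : 1 ≤ (1 + δ*s*a)/(1 + δ*s*b) := (one_le_div hdb).mpr (by linarith)
  have hlq : 0 ≤ Real.log ((1 + δ*s*a)/(1 + δ*s*b)) := Real.log_nonneg hq1
  rw [Real.logb]
  have hlognn : 0 ≤ θ * (Real.log ((1 + δ*s*a)/(1 + δ*s*b)) / Real.log 2) := by positivity
  constructor
  · have hle : Real.exp (-θ * (Real.log ((1 + δ*s*a)/(1 + δ*s*b)) / Real.log 2)) ≤ 1 := by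
      rw [Real.exp_le_one_iff]; linarith
    linarith
  · have h1 : 1 - Real.exp (-(θ * (Real.log ((1 + δ*s*a)/(1 + δ*s*b)) / Real.log 2)))
        ≤ θ * (Real.log ((1 + δ*s*a)/(1 + δ*s*b)) / Real.log 2) := by
      have := Real.add_one_le_exp (-(θ * (Real.log ((1 + δ*s*a)/(1 + δ*s*b)) / Real.log 2)))
      linarith
    have hbM : δ*s*(a-b) ≤ δ*s*M := by
      have hbM' : a - b ≤ M := by linarith
      have := mul_le_mul_of_nonneg_left hbM' hδs.le
      calc δ*s*(a-b) = δ*s*(a-b) := rfl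
        _ ≤ δ*s*M := by rw [mul_assoc, mul_assoc]; exact mul_le_mul_of_nonneg_left (by nlinarith) hδ.le
    have hlle : Real.log ((1 + δ*s*a)/(1 + δ*s*b)) ≤ δ*s*M := by
      have h2 := Real.log_le_sub_one_of_pos (lt_of_lt_of_le one_pos hq1)
      have h3 : (1 + δ*s*a)/(1 + δ*s*b) - 1 = (δ*s*(a-b))/(1+δ*s*b) := by
        field_simp; ring
      have h4 : (δ*s*(a-b))/(1+δ*s*b) ≤ δ*s*(a-b) :=
        div_le_self (by linarith) (by linarith)
      linarith
    calc 1 - Real.exp (-θ * (Real.log ((1 + δ*s*a)/(1 + δ*s*b)) / Real.log 2))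
        ≤ θ * (Real.log ((1 + δ*s*a)/(1 + δ*s*b)) / Real.log 2) := by rw [neg_mul]; exact h1
      _ ≤ θ * (δ*s*M / Real.log 2) := by gcongr
      _ = θ * δ * s * M / Real.log 2 := by ring

lemma aux_strict (θ δ s a b : ℝ) (hθ : 0 < θ) (hδ : 0 < δ) (hs : 0 < s)
    (hb : 0 ≤ b) (hba : b < a) :
    0 < 1 - Real.exp (-θ * Real.logb 2 ((1 + δ*s*a)/(1 + δ*s*b))) := by
  have hδs : 0 < δ * s := mul_pos hδ hs
  have hδsb : 0 ≤ δ*s*b := by positivity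
  have hab : δ*s*b < δ*s*a := by
    rw [mul_assoc, mul_assoc]
    exact mul_lt_mul_of_pos_left (by nlinarith) hδ
  have hdb : 0 < 1 + δ*s*b := by linarith
  have hq : 1 < (1 + δ*s*a)/(1 + δ*s*b) := (one_lt_div hdb).mpr (by linarith)
  have hl : 0 < Real.logb 2 ((1 + δ*s*a)/(1 + δ*s*b)) := Real.logb_pos one_lt_two hq
  have : Real.exp (-θ * Real.logb 2 ((1 + δ*s*a)/(1 + δ*s*b))) < 1 := by
    rw [neg_mul, Real.exp_lt_one_iff]; nlinarith
  linarith

/-- When data arrivals form an ON–OFF discrete-time Markov process,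
the minimum energy per bit for confidential message transmission to receiver 1 is the
same as for a constant-rate source:
`lim_{snr→0⁺} (δ·P(z1 ≥ z2)·snr)/r_avg(snr) = P(z1 ≥ z2)·log 2 / E[(z1 − z2)·1{z1 ≥ z2}]`,
independent of `θ`, `p11`, `p22`. -/
theorem minimum_energy_per_bit_confidential_discrete_markov
    {Ω : Type*} [MeasurableSpace Ω] (μ : Measure Ω) [IsProbabilityMeasure μ]
    (z1 z2 : Ω → ℝ) (hz1m : Measurable z1) (hz2m : Measurable z2)
    (hz1nn : ∀ ω, 0 ≤ z1 ω) (hz2nn : ∀ ω, 0 ≤ z2 ω)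
    (M : ℝ) (hz1b : ∀ ω, z1 ω ≤ M) (hz2b : ∀ ω, z2 ω ≤ M)
    (hpos : 0 < (μ {ω | z2 ω < z1 ω}).toReal)
    (θ δ p11 p22 : ℝ) (hθ : 0 < θ) (hδ0 : 0 < δ) (hδ1 : δ ≤ 1)
    (hp11 : p11 ∈ Set.Ioo (0 : ℝ) 1) (hp22 : p22 ∈ Set.Ioo (0 : ℝ) 1)
    (Pon : ℝ) (hPon : Pon = (1 - p11) / (2 - p11 - p22))
    (R1 : ℝ → Ω → ℝ)
    (hR1 : ∀ snr ω, R1 snr ω =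
      if z2 ω ≤ z1 ω then
        Real.logb 2 ((1 + δ * snr * z1 ω) / (1 + δ * snr * z2 ω)) else 0)
    (g1 : ℝ → ℝ) (hg1 : ∀ snr, g1 snr = ∫ ω, Real.exp (-θ * R1 snr ω) ∂μ)
    (ravg : ℝ → ℝ)
    (hravg : ∀ snr, ravg snr = (Pon / θ) * Real.log
      ((1 - p11 * g1 snr) / ((1 - p11 - p22) * (g1 snr) ^ 2 + p22 * g1 snr))) :
    Filter.Tendsto
      (fun snr => (δ * (μ {ω | z2 ω ≤ z1 ω}).toReal * snr) / ravg snr)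
      (nhdsWithin 0 (Set.Ioi 0))
      (nhds ((μ {ω | z2 ω ≤ z1 ω}).toReal * Real.log 2 /
        ∫ ω, (if z2 ω ≤ z1 ω then z1 ω - z2 ω else 0) ∂μ)) := by
  classical
  have hlog2 : 0 < Real.log 2 := Real.log_pos one_lt_two
  have h1p : (0:ℝ) < 1 - p11 := by linarith [hp11.2]
  have h2p : (0:ℝ) < 2 - p11 - p22 := by linarith [hp11.2, hp22.2]
  set A : Set Ω := {ω | z2 ω ≤ z1 ω} with hAdef
  have hAm : MeasurableSet A := measurableSet_le hz2m hz1m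
  have hμS : 0 < μ {ω | z2 ω < z1 ω} := by
    rcases (zero_le : 0 ≤ μ {ω | z2 ω < z1 ω}).lt_or_eq with h | h
    · exact h
    · exfalso; rw [← h] at hpos; simp at hpos
  obtain ⟨ω0, hω0⟩ : ∃ ω, z2 ω < z1 ω := by
    by_contra h; push_neg at h
    have he : {ω | z2 ω < z1 ω} = (∅ : Set Ω) :=
      eq_empty_iff_forall_notMem.mpr (fun ω hω => absurd hω (not_lt.mpr (h ω)))
    rw [he] at hμS; simp at hμS
  have hM0 : 0 ≤ M := le_trans (hz1nn ω0) (hz1b ω0)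
  set f : Ω → ℝ := fun ω => if z2 ω ≤ z1 ω then z1 ω - z2 ω else 0 with hfdef
  have hfm : Measurable f :=
    Measurable.ite (measurableSet_le hz2m hz1m) (hz1m.sub hz2m) measurable_const
  have hfnn : ∀ ω, 0 ≤ f ω := by
    intro ω; rw [hfdef]
    by_cases h : z2 ω ≤ z1 ω
    · simp only [if_pos h]; linarith
    · simp only [if_neg h]; exact le_refl 0
  have hfb : ∀ ω, ‖f ω‖ ≤ M := by
    intro ω
    rw [Real.norm_eq_abs, abs_of_nonneg (hfnn ω), hfdef]
    by_cases h : z2 ω ≤ z1 ω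
    · simp only [if_pos h]; linarith [hz1b ω, hz2nn ω]
    · simp only [if_neg h]; exact hM0
  have hfint : Integrable f μ :=
    ⟨hfm.aestronglyMeasurable, HasFiniteIntegral.of_bounded (ae_of_all _ hfb)⟩
  set E := ∫ ω, f ω ∂μ with hEdef
  have hE : 0 < E := by
    rw [hEdef, integral_pos_iff_support_of_nonneg hfnn hfint]
    refine lt_of_lt_of_le hμS (measure_mono ?_)
    intro ω hω
    refine Function.mem_support.mpr ?_
    have hω' : z2 ω < z1 ω := hω
    rw [hfdef]; simp only [if_pos hω'.le]
    exact (sub_pos.mpr hω').ne'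
  -- measurability of the exponential integrand
  have hGm : ∀ s : ℝ, Measurable fun ω => Real.exp (-θ * R1 s ω) := by
    intro s
    have hR : Measurable (R1 s) := by
      have he : R1 s = fun ω =>
          if z2 ω ≤ z1 ω then Real.logb 2 ((1 + δ*s*z1 ω)/(1 + δ*s*z2 ω)) else 0 :=
        funext (hR1 s)
      rw [he]
      refine Measurable.ite (measurableSet_le hz2m hz1m) ?_ measurable_const
      simp_rw [Real.logb]
      exact (Real.measurable_log.comp
        ((measurable_const.add (hz1m.const_mul (δ*s))).div
          (measurable_const.add (hz2m.const_mul (δ*s))))).div_const _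
    exact Real.measurable_exp.comp (hR.const_mul (-θ))
  -- bounds
  have hGb : ∀ s ∈ Ioi (0:ℝ), ∀ ω, 0 ≤ 1 - Real.exp (-θ * R1 s ω) ∧
      1 - Real.exp (-θ * R1 s ω) ≤ θ*δ*s*M/Real.log 2 := by
    intro s hs ω
    rw [hR1 s ω]
    by_cases hω : z2 ω ≤ z1 ω
    · rw [if_pos hω]
      exact aux_bound θ δ s (z1 ω) (z2 ω) M hθ hδ0 (mem_Ioi.mp hs) (hz2nn ω) hω (hz1b ω)
    · rw [if_neg hω]
      constructor
      · simp
      · have hsM : 0 ≤ θ*δ*s*M/Real.log 2 := by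
          have hs' : (0:ℝ) < s := mem_Ioi.mp hs
          positivity
        simpa using hsM
  have hGsub : ∀ s ∈ Ioi (0:ℝ), Integrable (fun ω => 1 - Real.exp (-θ * R1 s ω)) μ := by
    intro s hs
    refine ⟨(measurable_const.sub (hGm s)).aestronglyMeasurable,
      HasFiniteIntegral.of_bounded (C := θ*δ*s*M/Real.log 2) (ae_of_all _ fun ω => ?_)⟩
    have h := hGb s hs ω
    rw [Real.norm_eq_abs, abs_of_nonneg h.1]
    exact h.2
  have hg1eq : ∀ s ∈ Ioi (0:ℝ), 1 - g1 s = ∫ ω, (1 - Real.exp (-θ * R1 s ω)) ∂μ := by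
    intro s hs
    have hie : Integrable (fun ω => Real.exp (-θ * R1 s ω)) μ := by
      have he : (fun ω => Real.exp (-θ * R1 s ω))
          = fun ω => 1 - (1 - Real.exp (-θ * R1 s ω)) := by funext ω; ring
      rw [he]; exact (integrable_const 1).sub (hGsub s hs)
    rw [integral_sub (integrable_const 1) hie, integral_const]
    simp [hg1 s]
  have hεpos : ∀ s ∈ Ioi (0:ℝ), 0 < 1 - g1 s := by
    intro s hs
    rw [hg1eq s hs]
    rw [integral_pos_iff_support_of_nonneg (fun ω => (hGb s hs ω).1) (hGsub s hs)]
    refine lt_of_lt_of_le hμS (measure_mono ?_)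
    intro ω hω
    have hω' : z2 ω < z1 ω := hω
    refine Function.mem_support.mpr ?_
    have hpos' : 0 < 1 - Real.exp (-θ * R1 s ω) := by
      rw [hR1 s ω, if_pos hω'.le]
      exact aux_strict θ δ s (z1 ω) (z2 ω) hθ hδ0 (mem_Ioi.mp hs) (hz2nn ω) hω'
    exact hpos'.ne'
  -- dominated convergence
  have hDCT : Tendsto (fun s => ∫ ω, (1 - Real.exp (-θ * R1 s ω))/s ∂μ)
      (nhdsWithin 0 (Set.Ioi 0)) (nhds (∫ ω, θ*δ*f ω/Real.log 2 ∂μ)) := by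
    refine tendsto_integral_filter_of_dominated_convergence
      (fun _ => θ*δ*M/Real.log 2) ?_ ?_ (integrable_const _) ?_
    · exact Eventually.of_forall fun s =>
        ((measurable_const.sub (hGm s)).div_const s).aestronglyMeasurable
    · filter_upwards [self_mem_nhdsWithin] with s hs
      refine ae_of_all _ fun ω => ?_
      have h := hGb s hs ω
      have hs' : (0:ℝ) < s := mem_Ioi.mp hs
      rw [Real.norm_eq_abs, abs_div, abs_of_nonneg h.1, abs_of_pos hs', div_le_iff₀ hs']
      have heq : θ*δ*s*M/Real.log 2 = θ*δ*M/Real.log 2 * s := by ring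
      linarith [h.2]
    · refine ae_of_all _ fun ω => ?_
      by_cases hω : z2 ω ≤ z1 ω
      · have hd := aux_deriv θ δ (z1 ω) (z2 ω)
        have hslope := hasDerivAt_iff_tendsto_slope.mp hd
        have hmono : nhdsWithin (0:ℝ) (Set.Ioi 0) ≤ nhdsWithin (0:ℝ) {(0:ℝ)}ᶜ :=
          nhdsWithin_mono _ (fun x hx => ne_of_gt hx)
        have ht := hslope.mono_left hmono
        have hfω : f ω = z1 ω - z2 ω := by rw [hfdef]; simp only [if_pos hω]
        rw [show θ*δ*f ω/Real.log 2 = θ*δ*(z1 ω - z2 ω)/Real.log 2 by rw [hfω]]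
        apply ht.congr'
        filter_upwards [self_mem_nhdsWithin] with s hs
        rw [slope_def_field, hR1 s ω, if_pos hω, Real.logb]
        norm_num
      · have hz : ∀ s, (1 - Real.exp (-θ * R1 s ω))/s = 0 := by
          intro s; rw [hR1 s ω, if_neg hω]; simp
        rw [show (fun s : ℝ => (1 - Real.exp (-θ * R1 s ω))/s) = fun _ => (0:ℝ) from funext hz]
        have hfω : f ω = 0 := by rw [hfdef]; simp only [if_neg hω]
        rw [hfω]
        simpa using tendsto_const_nhds
  have hval : ∫ ω, θ*δ*f ω/Real.log 2 ∂μ = θ*δ*E/Real.log 2 := by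
    simp_rw [show ∀ x:ℝ, θ*δ*x/Real.log 2 = (θ*δ/Real.log 2)*x from fun x => by ring]
    rw [integral_const_mul, hEdef]
  have h1 : Tendsto (fun s => (1 - g1 s)/s) (nhdsWithin 0 (Set.Ioi 0))
      (nhds (θ*δ*E/Real.log 2)) := by
    rw [← hval]
    apply hDCT.congr'
    filter_upwards [self_mem_nhdsWithin] with s hs
    rw [integral_div, ← hg1eq s hs]
  have hg1to0 : Tendsto (fun s => 1 - g1 s) (nhdsWithin 0 (Set.Ioi 0)) (nhds 0) := by
    have hid : Tendsto (fun s : ℝ => s) (nhdsWithin 0 (Set.Ioi 0)) (nhds 0) :=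
      tendsto_id.mono_left nhdsWithin_le_nhds
    have hm := h1.mul hid
    rw [mul_zero] at hm
    apply hm.congr'
    filter_upwards [self_mem_nhdsWithin] with s hs
    exact div_mul_cancel₀ _ (ne_of_gt (mem_Ioi.mp hs))
  have hεt : Tendsto (fun s => 1 - g1 s) (nhdsWithin 0 (Set.Ioi 0))
      (nhdsWithin (0:ℝ) {(0:ℝ)}ᶜ) := by
    rw [tendsto_nhdsWithin_iff]
    refine ⟨hg1to0, ?_⟩
    filter_upwards [self_mem_nhdsWithin] with s hs
    exact (hεpos s hs).ne'
  have hφ := aux_phi p11 p22 hp11 hp22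
  have hφ0 : Real.log ((1 - p11 * 1) / ((1 - p11 - p22) * 1 ^ 2 + p22 * 1)) = 0 := by
    rw [show (1 - p11 * 1) = 1 - p11 by ring,
      show ((1 - p11 - p22) * 1 ^ 2 + p22 * 1) = 1 - p11 by ring,
      div_self h1p.ne', Real.log_one]
  have hslopeφ := hasDerivAt_iff_tendsto_slope.mp hφ
  have h2' : Tendsto (fun s => Real.log
      ((1 - p11 * g1 s) / ((1-p11-p22)*(g1 s)^2 + p22*(g1 s))) / (1 - g1 s))
      (nhdsWithin 0 (Set.Ioi 0)) (nhds ((2-p11-p22)/(1-p11))) := by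
    have hc := hslopeφ.comp hεt
    apply hc.congr
    intro s
    simp only [Function.comp_apply, slope_def_field, sub_sub_cancel, sub_zero, hφ0]
  have h2 : Tendsto (fun s => ravg s / s) (nhdsWithin 0 (Set.Ioi 0))
      (nhds (δ*E/Real.log 2)) := by
    have hmul := (h2'.const_mul (Pon/θ)).mul h1
    have hval2 : (Pon/θ) * ((2-p11-p22)/(1-p11)) * (θ*δ*E/Real.log 2) = δ*E/Real.log 2 := by
      rw [hPon]; field_simp
    rw [hval2] at hmul
    apply hmul.congr'
    filter_upwards [self_mem_nhdsWithin] with s hs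
    rw [hravg s]
    have hεne : 1 - g1 s ≠ 0 := (hεpos s hs).ne'
    have hsne : s ≠ 0 := ne_of_gt (mem_Ioi.mp hs)
    field_simp
  have hLpos : 0 < δ*E/Real.log 2 := by positivity
  have hconst : Tendsto (fun _ : ℝ => δ * (μ A).toReal) (nhdsWithin 0 (Set.Ioi 0))
      (nhds (δ * (μ A).toReal)) := tendsto_const_nhds
  have hfin := hconst.div h2 hLpos.ne'
  have hvalfin : δ * (μ A).toReal / (δ*E/Real.log 2) = (μ A).toReal * Real.log 2 / E := by
    field_simp
  rw [hvalfin] at hfin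
  apply hfin.congr'
  filter_upwards [self_mem_nhdsWithin] with s hs
  simp only [Pi.div_apply]
  rw [div_div_eq_mul_div]
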